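/- Let H be a finite-dimensional complex inner product space and let C ⊆ Submodule ℂ H be a maximal chain (a totally ordered subset maximal under inclusion; it necessarily contains ⊥ and ⊤). Define the centralizer Cent(C) = { x ∈ Submodule ℂ H | ∀ a ∈ C, (x ⊓ a) ⊔ (xᗮ ⊓ a) = a }, let L_C be the closure of C ∪ Cent(C) under finite meets and finite joins, and let B_C be the closure of L_C ∪ { yᗮ | y ∈ L_C } under finite meets and finite joins. Then B_C is a maximal Boolean sublattice of Submodule ℂ H. -/

import Mathlib

open Submodule

/-- A subset `B` of the lattice of subspaces of a complex inner product space is a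
*Boolean sublattice* if it contains `⊥` and `⊤`, is closed under `⊓`, `⊔` and
orthogonal complement, and satisfies the distributive law on its elements. -/
def IsBooleanSublattice {H : Type*} [NormedAddCommGroup H] [InnerProductSpace ℂ H]
    (B : Set (Submodule ℂ H)) : Prop :=
  ⊥ ∈ B ∧ ⊤ ∈ B ∧
  (∀ x ∈ B, ∀ y ∈ B, x ⊓ y ∈ B) ∧
  (∀ x ∈ B, ∀ y ∈ B, x ⊔ y ∈ B) ∧
  (∀ x ∈ B, xᗮ ∈ B) ∧
  (∀ x ∈ B, ∀ y ∈ B, ∀ z ∈ B, x ⊓ (y ⊔ z) = (x ⊓ y) ⊔ (x ⊓ z))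

/-- A Boolean sublattice is *maximal* if it is not properly contained in any other
Boolean sublattice. -/
def IsMaximalBooleanSublattice {H : Type*} [NormedAddCommGroup H] [InnerProductSpace ℂ H]
    (B : Set (Submodule ℂ H)) : Prop :=
  IsBooleanSublattice B ∧ ∀ B' : Set (Submodule ℂ H), IsBooleanSublattice B' → B ⊆ B' → B' = B

/-- The closure of a set in a lattice under finite meets and finite joins. -/
inductive LatticeClosure {α : Type*} [Lattice α] (s : Set α) : α → Prop
  | base : ∀ x ∈ s, LatticeClosure s x
  | inf : ∀ x y, LatticeClosure s x → LatticeClosure s y → LatticeClosure s (x ⊓ y)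
  | sup : ∀ x y, LatticeClosure s x → LatticeClosure s y → LatticeClosure s (x ⊔ y)

/-- The centralizer of a set `C` of subspaces: all subspaces `x` that commute with
every `a ∈ C`, i.e. `(x ⊓ a) ⊔ (xᗮ ⊓ a) = a`. -/
def Centralizer {H : Type*} [NormedAddCommGroup H] [InnerProductSpace ℂ H]
    (C : Set (Submodule ℂ H)) : Set (Submodule ℂ H) :=
  {x | ∀ a ∈ C, (x ⊓ a) ⊔ (xᗮ ⊓ a) = a}

open Module

set_option linter.unusedSectionVars false
set_option maxHeartbeats 1000000

namespace MB
section
variable {H : Type*} [NormedAddCommGroup H] [InnerProductSpace ℂ H] [FiniteDimensional ℂ H]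
variable {C : Set (Submodule ℂ H)}

lemma mem_of_comparable (hC : IsMaxChain (· ≤ ·) C) {x : Submodule ℂ H}
    (h : ∀ c ∈ C, x ≤ c ∨ c ≤ x) : x ∈ C := by
  have hchain : IsChain (· ≤ ·) (insert x C) := by
    intro a ha b hb hab
    rcases ha with rfl | ha
    · rcases hb with rfl | hb
      · exact absurd rfl hab
      · exact h b hb
    · rcases hb with rfl | hb
      · exact (h a ha).symm
      · exact hC.1 ha hb hab
  have := hC.2 hchain (Set.subset_insert _ _)
  rw [this]; exact Set.mem_insert _ _

lemma bot_mem (hC : IsMaxChain (· ≤ ·) C) : (⊥ : Submodule ℂ H) ∈ C :=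
  mem_of_comparable hC fun _ _ => Or.inl bot_le

lemma top_mem (hC : IsMaxChain (· ≤ ·) C) : (⊤ : Submodule ℂ H) ∈ C :=
  mem_of_comparable hC fun _ _ => Or.inr le_top

lemma chain_finite (hC : IsChain (· ≤ ·) C) : C.Finite := by
  have hinj : Set.InjOn (fun a : Submodule ℂ H => finrank ℂ a) C := by
    intro a ha b hb hab
    by_contra hne
    rcases hC ha hb hne with h | h
    · exact absurd hab (Nat.ne_of_lt (Submodule.finrank_lt_finrank_of_lt (lt_of_le_of_ne h hne)))
    · exact absurd hab.symm
        (Nat.ne_of_lt (Submodule.finrank_lt_finrank_of_lt (lt_of_le_of_ne h (Ne.symm hne))))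
  exact Set.Finite.of_finite_image
    ((Set.finite_Iic (finrank ℂ H)).subset (by rintro _ ⟨a, _, rfl⟩; exact a.finrank_le)) hinj

lemma exists_strictly_between {a b : Submodule ℂ H} (hab : a ≤ b)
    (h : finrank ℂ a + 1 < finrank ℂ b) : ∃ x, a < x ∧ x < b := by
  have hlt : a < b := lt_of_le_of_ne hab (by rintro rfl; omega)
  obtain ⟨v, hvb, hva⟩ := SetLike.exists_of_lt hlt
  have hv : v ≠ 0 := fun hv => hva (hv ▸ a.zero_mem)
  refine ⟨a ⊔ (ℂ ∙ v), lt_of_le_of_ne le_sup_left ?_, ?_⟩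
  · intro he
    exact hva (he ▸ Submodule.mem_sup_right (Submodule.mem_span_singleton_self v))
  · have hle : a ⊔ (ℂ ∙ v) ≤ b := sup_le hab ((Submodule.span_singleton_le_iff_mem v b).2 hvb)
    refine lt_of_le_of_ne hle ?_
    intro he
    have h1 : finrank ℂ (a ⊔ (ℂ ∙ v) : Submodule ℂ H) ≤ finrank ℂ a + finrank ℂ (ℂ ∙ v) :=
      Submodule.finrank_add_le_finrank_add_finrank a _
    rw [finrank_span_singleton hv, he] at h1
    omega
end
end MB
namespace MB
section
variable {H : Type*} [NormedAddCommGroup H] [InnerProductSpace ℂ H] [FiniteDimensional ℂ H]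
variable {C : Set (Submodule ℂ H)}

lemma exists_finrank_eq (hC : IsMaxChain (· ≤ ·) C) {k : ℕ} (hk : k ≤ finrank ℂ H) :
    ∃ a ∈ C, finrank ℂ a = k := by
  by_contra hno
  push_neg at hno
  have hfin : C.Finite := chain_finite hC.1
  set Cm : Set (Submodule ℂ H) := {c ∈ C | finrank ℂ c < k} with hCm
  set Cp : Set (Submodule ℂ H) := {c ∈ C | k < finrank ℂ c} with hCp
  have hkpos : 0 < k := by
    rcases Nat.eq_zero_or_pos k with rfl | h
    · exact absurd (finrank_bot ℂ H) (hno ⊥ (bot_mem hC))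
    · exact h
  have hkn : k < finrank ℂ H := by
    rcases lt_or_eq_of_le hk with h | rfl
    · exact h
    · exact absurd (finrank_top ℂ H) (hno ⊤ (top_mem hC))
  have hmem : ∀ c ∈ C, c ∈ Cm ∨ c ∈ Cp := by
    intro c hc
    rcases lt_trichotomy (finrank ℂ c) k with h | h | h
    · exact Or.inl ⟨hc, h⟩
    · exact absurd h (hno c hc)
    · exact Or.inr ⟨hc, h⟩
  obtain ⟨a, ha, hamax⟩ : ∃ a ∈ Cm, ∀ c ∈ Cm, a ≤ c → a = c := by
    obtain ⟨a, ha, hm⟩ := Set.Finite.exists_maximalFor id Cm (hfin.subset (Set.sep_subset _ _))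
      ⟨⊥, bot_mem hC, by simpa [finrank_bot] using hkpos⟩
    exact ⟨a, ha, fun c hc hac => le_antisymm hac (hm hc hac)⟩
  obtain ⟨haC, hak⟩ := ha
  obtain ⟨b, hb, hbmin⟩ : ∃ b ∈ Cp, ∀ c ∈ Cp, c ≤ b → b = c := by
    obtain ⟨b, hb, hm⟩ := Set.Finite.exists_minimalFor id Cp (hfin.subset (Set.sep_subset _ _))
      ⟨⊤, top_mem hC, by simpa [finrank_top] using hkn⟩
    exact ⟨b, hb, fun c hc hcb => le_antisymm (hm hc hcb) hcb⟩
  obtain ⟨hbC, hbk⟩ := hb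
  have hne : a ≠ b := fun h => by rw [h] at hak; omega
  have hab : a ≤ b := by
    rcases hC.1 haC hbC hne with h | h
    · exact h
    · have := Submodule.finrank_lt_finrank_of_lt (lt_of_le_of_ne h hne.symm)
      omega
  obtain ⟨x, hax, hxb⟩ := exists_strictly_between hab (by omega)
  have hxC : x ∈ C := by
    refine mem_of_comparable hC fun c hc => ?_
    rcases hmem c hc with h | h
    · refine Or.inr (le_trans ?_ hax.le)
      rcases eq_or_ne c a with rfl | hne'
      · exact le_rfl
      rcases hC.1 h.1 haC hne' with hca | hac
      · exact hca
      · exact le_of_eq (hamax c h hac).symm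
    · refine Or.inl (le_trans hxb.le ?_)
      rcases eq_or_ne c b with rfl | hne'
      · exact le_rfl
      rcases hC.1 h.1 hbC hne' with hcb | hbc
      · exact le_of_eq (hbmin c h hcb)
      · exact hbc
  rcases hmem x hxC with h | h
  · exact absurd (hamax x h hax.le) hax.ne
  · exact absurd (hbmin x h hxb.le).symm hxb.ne

end
end MB
namespace MB
section
variable {H : Type*} [NormedAddCommGroup H] [InnerProductSpace ℂ H] [FiniteDimensional ℂ H]
variable {C : Set (Submodule ℂ H)}

lemma orth_symm {A B : Submodule ℂ H} (h : A ≤ Bᗮ) : B ≤ Aᗮ :=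
  (Submodule.le_orthogonal_orthogonal B).trans (Submodule.orthogonal_le h)

lemma flag_exists (hC : IsMaxChain (· ≤ ·) C) :
    ∃ V : ℕ → Submodule ℂ H,
      (∀ k, k ≤ finrank ℂ H → V k ∈ C) ∧
      (∀ k, k ≤ finrank ℂ H → finrank ℂ (V k) = k) ∧
      (∀ a ∈ C, a = V (finrank ℂ a)) ∧
      (∀ j k, j ≤ k → k ≤ finrank ℂ H → V j ≤ V k) := by
  have h : ∀ k : ℕ, ∃ a : Submodule ℂ H, a ∈ C ∧ (k ≤ finrank ℂ H → finrank ℂ a = k) := by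
    intro k
    by_cases hk : k ≤ finrank ℂ H
    · obtain ⟨a, ha, hr⟩ := exists_finrank_eq hC hk
      exact ⟨a, ha, fun _ => hr⟩
    · exact ⟨⊤, top_mem hC, fun h => absurd h hk⟩
  choose V hVC hVr using h
  have huniq : ∀ a ∈ C, ∀ k, k ≤ finrank ℂ H → finrank ℂ a = k → a = V k := by
    intro a ha k hk hr
    rcases eq_or_ne a (V k) with h | hne
    · exact h
    rcases hC.1 ha (hVC k) hne with h | h
    · have := Submodule.finrank_lt_finrank_of_lt (lt_of_le_of_ne h hne)
      rw [hr, hVr k hk] at this; omega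
    · have := Submodule.finrank_lt_finrank_of_lt (lt_of_le_of_ne h hne.symm)
      rw [hr, hVr k hk] at this; omega
  refine ⟨V, fun k _ => hVC k, hVr, ?_, ?_⟩
  · intro a ha
    exact huniq a ha _ a.finrank_le rfl
  · intro j k hjk hk
    rcases eq_or_ne (V j) (V k) with h | hne
    · exact le_of_eq h
    rcases hC.1 (hVC j) (hVC k) hne with h | h
    · exact h
    · have := Submodule.finrank_lt_finrank_of_lt (lt_of_le_of_ne h hne.symm)
      rw [hVr j (le_trans hjk hk), hVr k hk] at this; omega

lemma orth_piece {A B W b : Submodule ℂ H} (hsup : A ⊔ B = b) (hAB : B ≤ Aᗮ)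
    (hAW : A ≤ W) : b ⊓ Wᗮ ≤ B := by
  intro v hv
  obtain ⟨hvb, hvW⟩ := hv
  obtain ⟨u, hu, w, hw, huw⟩ := Submodule.mem_sup.1 (show v ∈ A ⊔ B from hsup ▸ hvb)
  have h1 : (inner ℂ u v : ℂ) = 0 := (Submodule.mem_orthogonal _ _).1 hvW u (hAW hu)
  have h2 : (inner ℂ u w : ℂ) = 0 := (Submodule.mem_orthogonal _ _).1 (hAB hw) u hu
  have h3 : (inner ℂ u u : ℂ) = 0 := by
    have : (inner ℂ u v : ℂ) = inner ℂ u u + inner ℂ u w := by rw [← huw, inner_add_right]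
    rw [h1, h2, add_zero] at this
    exact this.symm
  have hu0 : u = 0 := inner_self_eq_zero.1 h3
  have : v = w := by rw [← huw, hu0, zero_add]
  exact this ▸ hw

end
end MB
namespace MB
section
variable {H : Type*} [NormedAddCommGroup H] [InnerProductSpace ℂ H] [FiniteDimensional ℂ H]
variable {C : Set (Submodule ℂ H)}

open Finset in
lemma master (hC : IsMaxChain (· ≤ ·) C) :
    ∃ E : Fin (finrank ℂ H) → Submodule ℂ H,
      (∀ S : Finset (Fin (finrank ℂ H)), (S.sup E)ᗮ = Sᶜ.sup E) ∧
      (∀ a ∈ C, ∃ S : Finset (Fin (finrank ℂ H)), a = S.sup E) ∧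
      (∀ x ∈ Centralizer C, ∃ S : Finset (Fin (finrank ℂ H)), x = S.sup E) ∧
      (∀ i, ∃ a ∈ C, ∃ b ∈ C, E i = bᗮ ⊓ a) ∧
      (∀ S T : Finset (Fin (finrank ℂ H)), S.sup E ⊓ T.sup E = (S ∩ T).sup E) := by
  classical
  obtain ⟨V, hVC, hVr, hVrep, hVmono⟩ := flag_exists hC
  set n := finrank ℂ H with hn
  set E : Fin n → Submodule ℂ H := fun i => (V i)ᗮ ⊓ V (i + 1) with hE
  have hstep : ∀ i : Fin n, V i ≤ V (i + 1) := fun i => hVmono i (i + 1) (by omega) i.2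
  have hE1 : ∀ i : Fin n, finrank ℂ (E i) = 1 := by
    intro i
    have h2 := Submodule.finrank_add_inf_finrank_orthogonal (hstep i)
    rw [hVr i (le_of_lt (by exact_mod_cast i.2)), hVr (i + 1) i.2] at h2
    show finrank ℂ ((V (i:ℕ))ᗮ ⊓ V ((i:ℕ)+1) : Submodule ℂ H) = 1
    omega
  have hEV : ∀ i : Fin n, E i ≤ V (i + 1) := fun i => inf_le_right
  have hEVp : ∀ i : Fin n, E i ≤ (V i)ᗮ := fun i => inf_le_left
  have horth : ∀ i j : Fin n, i ≠ j → E i ≤ (E j)ᗮ := by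
    have key : ∀ i j : Fin n, (i : ℕ) < j → E i ≤ (E j)ᗮ := by
      intro i j hij
      have h1 : E i ≤ V j := (hEV i).trans (hVmono (i + 1) j (by omega) (le_of_lt j.2))
      exact h1.trans ((Submodule.le_orthogonal_orthogonal _).trans
        (Submodule.orthogonal_le (hEVp j)))
    intro i j hij
    rcases lt_or_gt_of_ne (fun h : (i : ℕ) = (j : ℕ) => hij (Fin.ext h)) with h | h
    · exact key i j h
    · exact orth_symm (key j i h)
  have hdisj : ∀ (S : Finset (Fin n)) (j : Fin n), j ∉ S → S.sup E ≤ (E j)ᗮ := by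
    intro S j hj
    exact Finset.sup_le fun i hi => horth i j (fun h => hj (h ▸ hi))
  have hcard : ∀ S : Finset (Fin n), finrank ℂ (S.sup E : Submodule ℂ H) = S.card := by
    intro S
    induction S using Finset.induction with
    | empty => simp [finrank_bot]
    | @insert j S' hj ih =>
      rw [Finset.sup_insert, Finset.card_insert_of_notMem hj]
      have hd : E j ⊓ S'.sup E = ⊥ := by
        have : E j ⊓ S'.sup E ≤ E j ⊓ (E j)ᗮ := inf_le_inf le_rfl (hdisj S' j hj)
        rw [(Submodule.orthogonal_disjoint (E j)).eq_bot] at this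
        exact le_bot_iff.1 this
      have := Submodule.finrank_sup_add_finrank_inf_eq (E j) (S'.sup E)
      rw [hd, finrank_bot, add_zero, hE1 j, ih] at this
      omega
  have hperp : ∀ S : Finset (Fin n), (S.sup E)ᗮ = Sᶜ.sup E := by
    intro S
    have hle : Sᶜ.sup E ≤ (S.sup E)ᗮ :=
      Finset.sup_le fun j hj => orth_symm (hdisj S j (Finset.mem_compl.1 hj))
    have h1 : finrank ℂ ((S.sup E)ᗮ : Submodule ℂ H) = n - S.card := by
      have := Submodule.finrank_add_finrank_orthogonal (K := S.sup E)
      rw [hcard S] at this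
      omega
    have h2 : finrank ℂ (Sᶜ.sup E : Submodule ℂ H) = n - S.card := by
      rw [hcard, Finset.card_compl, Fintype.card_fin]
    exact (Submodule.eq_of_le_of_finrank_eq hle (by rw [h1, h2])).symm
  have hinf : ∀ S T : Finset (Fin n), S.sup E ⊓ T.sup E = (S ∩ T).sup E := by
    intro S T
    have h1 : S.sup E ⊓ T.sup E = ((S.sup E)ᗮ ⊔ (T.sup E)ᗮ)ᗮ := by
      rw [← Submodule.inf_orthogonal, Submodule.orthogonal_orthogonal,
        Submodule.orthogonal_orthogonal]
    rw [h1, hperp S, hperp T, ← Finset.sup_union, ← Finset.compl_inter, ← hperp,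
      Submodule.orthogonal_orthogonal]
  have hVsup : ∀ k, k ≤ n → V k = (Finset.univ.filter (fun i : Fin n => (i : ℕ) < k)).sup E := by
    intro k
    induction k with
    | zero =>
      intro _
      have : V 0 = ⊥ := Submodule.finrank_eq_zero.1 (hVr 0 (Nat.zero_le n))
      simp [this]
    | succ k ih =>
      intro hk
      have hkn : k ≤ n := by omega
      have hfil : (Finset.univ.filter (fun i : Fin n => (i : ℕ) < k + 1)) =
          insert (⟨k, hk⟩ : Fin n) (Finset.univ.filter (fun i : Fin n => (i : ℕ) < k)) := by
        ext i
        simp only [Finset.mem_filter, Finset.mem_univ, true_and, Finset.mem_insert, Fin.ext_iff]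
        omega
      rw [hfil, Finset.sup_insert, ← ih hkn]
      have h2 := Submodule.sup_orthogonal_inf_of_hasOrthogonalProjection (hstep ⟨k, hk⟩)
      show V (k+1) = ((V k)ᗮ ⊓ V (k+1)) ⊔ V k
      rw [sup_comm]
      exact h2.symm
  have hCrep : ∀ a ∈ C, ∃ S : Finset (Fin n), a = S.sup E := by
    intro a ha
    exact ⟨_, (hVrep a ha).trans (hVsup (finrank ℂ a) a.finrank_le)⟩
  refine ⟨E, hperp, hCrep, ?_, ?_, hinf⟩
  · -- centralizer representation
    intro x hx
    have hdich : ∀ i : Fin n, E i ≤ x ∨ E i ≤ xᗮ := by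
      intro i
      have hin : i + 1 ≤ n := i.2
      have ha : (x ⊓ V i) ⊔ (xᗮ ⊓ V i) = V i := hx (V i) (hVC i (le_of_lt (by exact_mod_cast i.2)))
      have hb : (x ⊓ V (i+1)) ⊔ (xᗮ ⊓ V (i+1)) = V (i+1) := hx (V (i+1)) (hVC (i+1) hin)
      have hdisjx : ∀ y : Submodule ℂ H, (x ⊓ y) ⊓ (xᗮ ⊓ y) = ⊥ := by
        intro y
        have : (x ⊓ y) ⊓ (xᗮ ⊓ y) ≤ x ⊓ xᗮ :=
          inf_le_inf inf_le_left inf_le_left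
        rw [(Submodule.orthogonal_disjoint x).eq_bot] at this
        exact le_bot_iff.1 this
      have hsum : ∀ y : Submodule ℂ H, finrank ℂ (x ⊓ y : Submodule ℂ H)
          + finrank ℂ (xᗮ ⊓ y : Submodule ℂ H) = finrank ℂ (((x ⊓ y) ⊔ (xᗮ ⊓ y)) : Submodule ℂ H) := by
        intro y
        have := Submodule.finrank_sup_add_finrank_inf_eq (x ⊓ y) (xᗮ ⊓ y)
        rw [hdisjx y, finrank_bot, add_zero] at this
        exact this.symm
      have hsa := hsum (V i); rw [ha, hVr i (by omega)] at hsa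
      have hsb := hsum (V (i+1)); rw [hb, hVr (i+1) hin] at hsb
      have hm1 : finrank ℂ (x ⊓ V i : Submodule ℂ H) ≤ finrank ℂ (x ⊓ V (i+1) : Submodule ℂ H) :=
        Submodule.finrank_mono (inf_le_inf le_rfl (hstep i))
      have hm2 : finrank ℂ (xᗮ ⊓ V i : Submodule ℂ H) ≤ finrank ℂ (xᗮ ⊓ V (i+1) : Submodule ℂ H) :=
        Submodule.finrank_mono (inf_le_inf le_rfl (hstep i))
      rcases Nat.lt_or_ge (finrank ℂ (x ⊓ V i : Submodule ℂ H))
        (finrank ℂ (x ⊓ V (i+1) : Submodule ℂ H)) with hlt | hge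
      · -- x-side grows, so xᗮ side is constant: E i ≤ x
        have heq : xᗮ ⊓ V i = xᗮ ⊓ V (i+1) :=
          Submodule.eq_of_le_of_finrank_eq (inf_le_inf le_rfl (hstep i)) (by omega)
        left
        have := orth_piece (b := V (i+1)) (A := xᗮ ⊓ V (i+1)) (B := x ⊓ V (i+1)) (W := V i)
          (by rw [sup_comm]; exact hb)
          (le_trans inf_le_left (le_trans (Submodule.le_orthogonal_orthogonal x)
            (Submodule.orthogonal_le inf_le_left)))
          (heq ▸ inf_le_right)
        exact le_trans (le_of_eq (by rw [inf_comm])) (this.trans inf_le_left)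
      · -- x side constant : E i ≤ xᗮ
        have heq : x ⊓ V i = x ⊓ V (i+1) :=
          Submodule.eq_of_le_of_finrank_eq (inf_le_inf le_rfl (hstep i)) (by omega)
        right
        have := orth_piece (b := V (i+1)) (A := x ⊓ V (i+1)) (B := xᗮ ⊓ V (i+1)) (W := V i)
          hb
          (le_trans inf_le_left (Submodule.orthogonal_le inf_le_left))
          (heq ▸ inf_le_right)
        exact le_trans (le_of_eq (by rw [inf_comm])) (this.trans inf_le_left)
    refine ⟨Finset.univ.filter (fun i => E i ≤ x), le_antisymm ?_ ?_⟩
    · have h1 : (Finset.univ.filter (fun i => E i ≤ x))ᶜ.sup E ≤ xᗮ := by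
        refine Finset.sup_le fun j hj => ?_
        have : ¬ E j ≤ x := by
          have := Finset.mem_compl.1 hj
          simpa using this
        rcases hdich j with h | h
        · exact absurd h this
        · exact h
      calc x ≤ xᗮᗮ := Submodule.le_orthogonal_orthogonal x
        _ ≤ ((Finset.univ.filter (fun i => E i ≤ x))ᶜ.sup E)ᗮ := Submodule.orthogonal_le h1
        _ = _ := by rw [hperp, compl_compl]
    · exact Finset.sup_le fun i hi => (Finset.mem_filter.1 hi).2
  · intro i
    exact ⟨V (i+1), hVC (i+1) i.2, V i, hVC i (le_of_lt (by exact_mod_cast i.2)), rfl⟩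

end
end MB

/-- Starting from a maximal chain `C` in `Submodule ℂ H`, closing `C ∪ Cent(C)` under
finite meets and joins to get `L_C`, and then closing `L_C ∪ {yᗮ | y ∈ L_C}` under
finite meets and joins, yields a maximal Boolean sublattice `B_C` of `Submodule ℂ H`. -/
theorem maximalChain_generates_maximalBooleanSublattice {H : Type*}
    [NormedAddCommGroup H] [InnerProductSpace ℂ H] [FiniteDimensional ℂ H]
    (C : Set (Submodule ℂ H)) (hC : IsMaxChain (· ≤ ·) C) :
    IsMaximalBooleanSublattice
      {x | LatticeClosure
        ({y | LatticeClosure (C ∪ Centralizer C) y} ∪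
          {y | ∃ z, LatticeClosure (C ∪ Centralizer C) z ∧ y = zᗮ}) x} := by
  classical
  obtain ⟨E, hperp, hCrep, hXrep, hEC, hinf⟩ := MB.master hC
  set D : Set (Submodule ℂ H) := {x | ∃ S : Finset (Fin (finrank ℂ H)), x = S.sup E} with hD
  -- D is contained in the centralizer
  have hDcent : D ⊆ Centralizer C := by
    rintro z ⟨S, rfl⟩ a ha
    obtain ⟨T, rfl⟩ := hCrep a ha
    rw [hperp, hinf, hinf, ← Finset.sup_union]
    congr 1
    ext i
    simp only [Finset.mem_union, Finset.mem_inter, Finset.mem_compl]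
    tauto
  have hDinf : ∀ x ∈ D, ∀ y ∈ D, x ⊓ y ∈ D := by
    rintro x ⟨S, rfl⟩ y ⟨T, rfl⟩
    exact ⟨S ∩ T, hinf S T⟩
  have hDsup : ∀ x ∈ D, ∀ y ∈ D, x ⊔ y ∈ D := by
    rintro x ⟨S, rfl⟩ y ⟨T, rfl⟩
    exact ⟨S ∪ T, (Finset.sup_union).symm⟩
  have hLD : ∀ y, LatticeClosure (C ∪ Centralizer C) y → y ∈ D := by
    intro y hy
    induction hy with
    | base x hx =>
      rcases hx with hx | hx
      · exact hCrep x hx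
      · exact hXrep x hx
    | inf x y _ _ ihx ihy => exact hDinf x ihx y ihy
    | sup x y _ _ ihx ihy => exact hDsup x ihx y ihy
  have hset : {x | LatticeClosure
        ({y | LatticeClosure (C ∪ Centralizer C) y} ∪
          {y | ∃ z, LatticeClosure (C ∪ Centralizer C) z ∧ y = zᗮ}) x} = D := by
    apply Set.Subset.antisymm
    · intro x hx
      induction hx with
      | base x hx =>
        rcases hx with hx | ⟨z, hz, rfl⟩
        · exact hLD x hx
        · obtain ⟨S, rfl⟩ := hLD z hz
          exact ⟨Sᶜ, hperp S⟩
      | inf x y _ _ ihx ihy => exact hDinf x ihx y ihy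
      | sup x y _ _ ihx ihy => exact hDsup x ihx y ihy
    · rintro x ⟨S, rfl⟩
      induction S using Finset.induction with
      | empty =>
        simp only [Finset.sup_empty]
        exact LatticeClosure.base ⊥ (Or.inl (LatticeClosure.base ⊥ (Or.inl (MB.bot_mem hC))))
      | @insert j S' hj ih =>
        rw [Finset.sup_insert]
        refine LatticeClosure.sup _ _ ?_ ih
        obtain ⟨a, ha, b, hb, hEj⟩ := hEC j
        rw [hEj]
        exact LatticeClosure.inf _ _
          (LatticeClosure.base _ (Or.inr ⟨b, LatticeClosure.base b (Or.inl hb), rfl⟩))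
          (LatticeClosure.base _ (Or.inl (LatticeClosure.base a (Or.inl ha))))
  rw [hset]
  constructor
  · refine ⟨⟨∅, by simp⟩, ?_, hDinf, hDsup, ?_, ?_⟩
    · obtain ⟨S, hS⟩ := hCrep ⊤ (MB.top_mem hC)
      refine ⟨Finset.univ, le_antisymm ?_ le_top⟩
      rw [hS]
      exact Finset.sup_mono (Finset.subset_univ S)
    · rintro x ⟨S, rfl⟩
      exact ⟨Sᶜ, hperp S⟩
    · rintro x ⟨S, rfl⟩ y ⟨T, rfl⟩ z ⟨U, rfl⟩
      rw [← Finset.sup_union, hinf, hinf, hinf, ← Finset.sup_union,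
        Finset.inter_union_distrib_left]
  · intro B' hB' hDB'
    apply Set.Subset.antisymm _ hDB'
    intro x hx
    have hxc : x ∈ Centralizer C := by
      intro a ha
      have haB : a ∈ B' := hDB' (hCrep a ha |>.elim fun S hS => ⟨S, hS⟩)
      have hxorth : xᗮ ∈ B' := hB'.2.2.2.2.1 x hx
      have hdist := hB'.2.2.2.2.2 a haB x hx xᗮ hxorth
      have hsup : x ⊔ xᗮ = ⊤ := Submodule.sup_orthogonal_of_hasOrthogonalProjection
      rw [hsup, inf_top_eq] at hdist
      rw [inf_comm a x, inf_comm a xᗮ] at hdist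
      exact hdist.symm
    exact hXrep x hxc
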